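/- For a positive integer k, setting n = 2k+1, and 0 < x < 1, we have ₂F₁(1, n - 1/2; (n+1)/2; x) = ((n-1)/(2(1-x)^{k+1/2} x^k)) · Σ_{j=0}^{k-1} (-1)^j C(k-1, j) (1 - (1-x)^{j+k+1/2}) / (j + k + 1/2). -/

import Mathlib

open Finset

/-- The Gauss hypergeometric function `₂F₁(a,b;c;x)`. -/
noncomputable def gaussHypergeom (a b c x : ℝ) : ℝ :=
  ∑' k : ℕ, (ascPochhammer ℝ k).eval a * (ascPochhammer ℝ k).eval b /
      (ascPochhammer ℝ k).eval c * x ^ k / (Nat.factorial k)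

section Aux
open Filter

noncomputable def Sc (k m : ℕ) : ℝ :=
  (ascPochhammer ℝ m).eval (2*(k:ℝ) + 1/2) / (ascPochhammer ℝ m).eval ((k:ℝ)+1)

lemma Sc_pos (k m : ℕ) : 0 < Sc k m := by
  unfold Sc; apply div_pos <;> exact ascPochhammer_pos _ _ (by positivity)

lemma Sc_succ (k m : ℕ) : Sc k (m+1) = Sc k m * ((2*(k:ℝ) + 1/2 + m) / ((k:ℝ) + 1 + m)) := by
  unfold Sc
  rw [ascPochhammer_succ_eval, ascPochhammer_succ_eval, div_mul_div_comm]

-- tendsto of (m+a)/(m+b) → 1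
lemma tendsto_ratio (a b : ℝ) : Tendsto (fun m : ℕ => ((m:ℝ) + a) / ((m:ℝ) + b)) atTop (nhds 1) := by
  have h : Tendsto (fun m : ℕ => 1 + (a - b) * ((m:ℝ) + b)⁻¹) atTop (nhds (1 + (a-b) * 0)) := by
    apply Tendsto.add tendsto_const_nhds
    apply Tendsto.const_mul
    exact (tendsto_inv_atTop_zero).comp (tendsto_atTop_add_const_right _ b tendsto_natCast_atTop_atTop)
  have h2 : ∀ᶠ m : ℕ in atTop, 1 + (a - b) * ((m:ℝ) + b)⁻¹ = ((m:ℝ) + a) / ((m:ℝ) + b) := by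
    filter_upwards [eventually_gt_atTop (Nat.ceil |b|)] with m hm
    have : (m:ℝ) + b ≠ 0 := by
      have : |b| < m := lt_of_le_of_lt (Nat.le_ceil _) (by exact_mod_cast hm)
      have := abs_lt.1 this
      nlinarith [this.1, this.2]
    field_simp
    ring
  simpa using h.congr' h2

lemma summable_master (k j : ℕ) {s : ℝ} (h0 : 0 < s) (h1 : s < 1) :
    Summable (fun m : ℕ => ((m:ℝ)+1)^j * Sc k m * s^m) := by
  set f : ℕ → ℝ := fun m => ((m:ℝ)+1)^j * Sc k m * s^m with hf
  have hfpos : ∀ m, 0 < f m := fun m => by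
    have := Sc_pos k m
    positivity
  apply summable_of_ratio_test_tendsto_lt_one h1
  · exact Eventually.of_forall fun m => (hfpos m).ne'
  · have heq : ∀ m : ℕ, ‖f (m+1)‖ / ‖f m‖ =
        (((m:ℝ) + 2) / ((m:ℝ) + 1))^j * (((m:ℝ) + (2*(k:ℝ)+1/2)) / ((m:ℝ) + ((k:ℝ)+1))) * s := by
      intro m
      have h1' := Sc_pos k m
      have h2 : (0:ℝ) < (m:ℝ) + 1 := by positivity
      have h3 : (0:ℝ) < (m:ℝ) + ((k:ℝ)+1) := by positivity
      rw [Real.norm_eq_abs, Real.norm_eq_abs, abs_of_pos (hfpos _), abs_of_pos (hfpos _), hf]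
      simp only
      rw [Sc_succ]
      push_cast
      rw [div_pow]
      field_simp
      ring
    rw [show (nhds s) = nhds ((1:ℝ)^j * 1 * s) by norm_num]
    refine Tendsto.congr (fun m => (heq m).symm) (Tendsto.mul_const s (Tendsto.mul ?_ ?_))
    · exact (tendsto_ratio 2 1).pow j
    · have := tendsto_ratio (2*(k:ℝ)+1/2) ((k:ℝ)+1)
      convert this using 2

lemma summable_master' (k j : ℕ) {s : ℝ} (h0 : 0 ≤ s) (h1 : s < 1) :
    Summable (fun m : ℕ => ((m:ℝ)+1)^j * Sc k m * s^m) := by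
  rcases h0.eq_or_lt with h | h
  · have hz : ∀ m ∉ ({0} : Finset ℕ), ((m:ℝ)+1)^j * Sc k m * s^m = 0 := by
      intro m hm
      simp only [Finset.mem_singleton] at hm
      rw [← h, zero_pow hm, mul_zero]
    exact summable_of_ne_finset_zero hz
  · exact summable_master k j h h1

lemma summable_poly (k : ℕ) (c : ℝ) (hc : 0 ≤ c) {y : ℝ} (h0 : 0 ≤ y) (h1 : y < 1) :
    Summable (fun m : ℕ => ((m:ℝ)+c) * Sc k m * y^m) := by
  refine Summable.of_nonneg_of_le (fun m => ?_) (fun m => ?_)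
    (((summable_master' k 1 h0 h1)).mul_left (c+1))
  · have := (Sc_pos k m).le
    positivity
  · have h2 := (Sc_pos k m).le
    have h3 : (0:ℝ) ≤ y^m := by positivity
    have h4 : ((m:ℝ)+c) ≤ (c+1) * ((m:ℝ)+1)^1 := by
      have : (0:ℝ) ≤ c * m := by positivity
      nlinarith
    calc ((m:ℝ)+c) * Sc k m * y^m ≤ ((c+1) * ((m:ℝ)+1)^1) * Sc k m * y^m := by
          exact mul_le_mul_of_nonneg_right (mul_le_mul_of_nonneg_right h4 h2) h3
      _ = (c+1) * (((m:ℝ)+1)^1 * Sc k m * y^m) := by ring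

lemma summable_S (k : ℕ) {y : ℝ} (h0 : 0 ≤ y) (h1 : y < 1) :
    Summable (fun m : ℕ => Sc k m * y^m) := by
  have := summable_master' k 0 h0 h1
  simpa using this

lemma hasDerivAt_S (k : ℕ) {y : ℝ} (hy : |y| < 1) :
    HasDerivAt (fun z => ∑' m : ℕ, Sc k m * z^m)
      (∑' m : ℕ, Sc k m * ((m:ℝ) * y^(m-1))) y := by
  set r : ℝ := (|y| + 1) / 2 with hr
  have hy0 : (0:ℝ) ≤ |y| := abs_nonneg y
  have hr0 : 0 < r := by rw [hr]; positivity
  have hr1 : r < 1 := by rw [hr]; linarith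
  have hyr : |y| < r := by rw [hr]; linarith
  have hu : Summable (fun m : ℕ => (((m:ℝ)+1) * Sc k m * r^m) / r) := by
    apply Summable.div_const
    have := summable_master' k 1 hr0.le hr1
    simpa using this
  apply hasDerivAt_tsum_of_isPreconnected hu (isOpen_Ioo (a := -r) (b := r))
    (convex_Ioo _ _).isPreconnected
    (g := fun m z => Sc k m * z^m) (g' := fun m z => Sc k m * ((m:ℝ) * z^(m-1)))
    (y₀ := 0)
  · intro m z _
    exact (hasDerivAt_pow m z).const_mul (Sc k m)
  · intro m z hz
    have hz' : |z| ≤ r := by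
      rw [abs_le]
      exact ⟨(Set.mem_Ioo.1 hz).1.le, (Set.mem_Ioo.1 hz).2.le⟩
    have hSc := (Sc_pos k m).le
    rw [Real.norm_eq_abs, abs_mul, abs_mul, abs_of_nonneg hSc, Nat.abs_cast, abs_pow]
    rcases Nat.eq_zero_or_pos m with hm | hm
    · subst hm; simp; positivity
    · have h1 : |z|^(m-1) ≤ r^(m-1) := pow_le_pow_left₀ (abs_nonneg z) hz' _
      have h2 : (m:ℝ) * |z|^(m-1) ≤ (m:ℝ) * r^(m-1) := by
        apply mul_le_mul_of_nonneg_left h1 (by positivity)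
      have h3 : r^(m-1) = r^m / r := by
        rw [eq_div_iff hr0.ne', ← pow_succ, Nat.sub_add_cancel hm]
      calc Sc k m * ((m:ℝ) * |z|^(m-1)) ≤ Sc k m * ((m:ℝ) * r^(m-1)) :=
            mul_le_mul_of_nonneg_left h2 hSc
        _ ≤ (((m:ℝ)+1) * Sc k m * r^m) / r := by
            rw [h3, show Sc k m * ((m:ℝ) * (r^m / r)) = (m:ℝ) * Sc k m * r^m / r by ring]
            gcongr
            linarith
  · exact Set.mem_Ioo.2 ⟨by linarith, by linarith⟩
  · exact summable_S k le_rfl zero_lt_one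
  · exact Set.mem_Ioo.2 (abs_lt.1 hyr)

lemma Sc_zero (k : ℕ) : Sc k 0 = 1 := by
  simp [Sc]

lemma ode (k : ℕ) {y : ℝ} (h0 : 0 ≤ y) (h1 : y < 1) :
    y * (1-y) * (∑' m : ℕ, Sc k m * ((m:ℝ) * y^(m-1)))
      + ((k:ℝ) - (2*(k:ℝ)+1/2)*y) * (∑' m : ℕ, Sc k m * y^m) = k := by
  have hA : Summable (fun m : ℕ => ((m:ℝ)+(k:ℝ)) * Sc k m * y^m) :=
    summable_poly k k (by positivity) h0 h1
  have hS : Summable (fun m : ℕ => Sc k m * y^m) := summable_S k h0 h1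
  have hM : Summable (fun m : ℕ => (m:ℝ) * Sc k m * y^m) := by
    simpa using summable_poly k 0 le_rfl h0 h1
  -- step 1 : y * D = M
  have hyD : y * (∑' m : ℕ, Sc k m * ((m:ℝ) * y^(m-1)))
      = ∑' m : ℕ, (m:ℝ) * Sc k m * y^m := by
    rw [← tsum_mul_left]
    apply tsum_congr
    intro m
    cases m with
    | zero => simp
    | succ m =>
      simp only [Nat.add_sub_cancel, pow_succ]
      push_cast
      ring
  -- step 2 : A = M + k * S
  have hAeq : (∑' m : ℕ, ((m:ℝ)+(k:ℝ)) * Sc k m * y^m)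
      = (∑' m : ℕ, (m:ℝ) * Sc k m * y^m) + (k:ℝ) * (∑' m : ℕ, Sc k m * y^m) := by
    rw [← tsum_mul_left, ← Summable.tsum_add hM (hS.mul_left _)]
    apply tsum_congr
    intro m
    ring
  -- step 3 : A = k + y * B, where B = M + (2k+1/2) * S
  have hBeq : (∑' m : ℕ, ((m:ℝ)+(k:ℝ)) * Sc k m * y^m)
      = (k:ℝ) + y * ((∑' m : ℕ, (m:ℝ) * Sc k m * y^m)
          + (2*(k:ℝ)+1/2) * (∑' m : ℕ, Sc k m * y^m)) := by
    rw [Summable.tsum_eq_zero_add hA]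
    have h00 : ((0:ℕ):ℝ) + (k:ℝ) = (k:ℝ) := by norm_num
    have hterm : ∀ m : ℕ, ((↑(m+1):ℝ)+(k:ℝ)) * Sc k (m+1) * y^(m+1)
        = y * (((m:ℝ)+(2*(k:ℝ)+1/2)) * Sc k m * y^m) := by
      intro m
      have hd : ((k:ℝ) + 1 + m) ≠ 0 := by positivity
      rw [Sc_succ, pow_succ]
      field_simp
      push_cast
      ring
    rw [tsum_congr hterm, tsum_mul_left]
    have hB' : (∑' m : ℕ, ((m:ℝ)+(2*(k:ℝ)+1/2)) * Sc k m * y^m)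
        = (∑' m : ℕ, (m:ℝ) * Sc k m * y^m) + (2*(k:ℝ)+1/2) * (∑' m : ℕ, Sc k m * y^m) := by
      rw [← tsum_mul_left, ← Summable.tsum_add hM (hS.mul_left _)]
      apply tsum_congr
      intro m
      ring
    rw [hB']
    simp [Sc_zero]
  have E := hAeq.symm.trans hBeq
  linear_combination E + (1 - y) * hyD

lemma hasDerivAt_g (k : ℕ) (hk : 0 < k) {y : ℝ} (h0 : 0 ≤ y) (h1 : y < 1) :
    HasDerivAt (fun z => z^k * (1-z)^((k:ℝ)+1/2) * (∑' m : ℕ, Sc k m * z^m))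
      ((k:ℝ) * y^(k-1) * (1-y)^((k:ℝ)-1/2)) y := by
  have hy1 : (0:ℝ) < 1 - y := by linarith
  have hS : HasDerivAt (fun z => ∑' m : ℕ, Sc k m * z^m)
      (∑' m : ℕ, Sc k m * ((m:ℝ) * y^(m-1))) y :=
    hasDerivAt_S k (abs_lt.2 ⟨by linarith, h1⟩)
  have hinner : HasDerivAt (fun z : ℝ => 1 - z) (-1) y := by
    simpa using (hasDerivAt_id y).const_sub 1
  have hw : HasDerivAt (fun z : ℝ => (1-z)^((k:ℝ)+1/2))
      ((-1) * ((k:ℝ)+1/2) * (1-y)^((k:ℝ)+1/2-1)) y :=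
    hinner.rpow_const (Or.inl hy1.ne')
  have hpow : HasDerivAt (fun z : ℝ => z^k) ((k:ℝ)*y^(k-1)) y := hasDerivAt_pow k y
  have total := (hpow.mul hw).mul hS
  convert total using 1
  · rfl
  · rfl
  · rfl
  have he : (k:ℝ)+1/2-1 = (k:ℝ)-1/2 := by ring
  rw [he]
  simp only [Pi.mul_apply]
  have hw1 : (1-y)^((k:ℝ)+1/2) = (1-y) * (1-y)^((k:ℝ)-1/2) := by
    rw [show (k:ℝ)+1/2 = ((k:ℝ)-1/2) + 1 by ring, Real.rpow_add_one hy1.ne']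
    ring
  have hp1 : y^k = y^(k-1) * y := by
    rw [← pow_succ, Nat.sub_add_cancel hk]
  rw [hw1, hp1]
  have hode := ode k h0 h1
  linear_combination (-(y^(k-1)) * (1-y)^((k:ℝ)-1/2)) * hode

lemma hasDerivAt_h (k : ℕ) (hk : 0 < k) {y : ℝ} (h0 : 0 ≤ y) (h1 : y < 1) :
    HasDerivAt (fun z => (k:ℝ) * ∑ j ∈ Finset.range k,
        (-1:ℝ)^j * ((k-1).choose j : ℝ) * (1 - (1-z)^((j:ℝ)+k+1/2)) / ((j:ℝ)+k+1/2))
      ((k:ℝ) * y^(k-1) * (1-y)^((k:ℝ)-1/2)) y := by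
  have hy1 : (0:ℝ) < 1 - y := by linarith
  have hterm : ∀ j ∈ Finset.range k, HasDerivAt
      (fun z => (-1:ℝ)^j * ((k-1).choose j : ℝ) * (1 - (1-z)^((j:ℝ)+k+1/2)) / ((j:ℝ)+k+1/2))
      ((-1:ℝ)^j * ((k-1).choose j : ℝ) * (((j:ℝ)+k+1/2) * (1-y)^((j:ℝ)+k+1/2-1)) / ((j:ℝ)+k+1/2)) y := by
    intro j _
    have hinner : HasDerivAt (fun z : ℝ => 1 - z) (-1) y := by
      simpa using (hasDerivAt_id y).const_sub 1
    have hrp : HasDerivAt (fun z : ℝ => (1-z)^((j:ℝ)+k+1/2))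
        ((-1) * ((j:ℝ)+k+1/2) * (1-y)^((j:ℝ)+k+1/2-1)) y :=
      hinner.rpow_const (Or.inl hy1.ne')
    have h2 : HasDerivAt (fun z : ℝ => 1 - (1-z)^((j:ℝ)+k+1/2))
        (((j:ℝ)+k+1/2) * (1-y)^((j:ℝ)+k+1/2-1)) y := by
      convert hrp.const_sub 1 using 1
      · rfl
      · rfl
      ring
    exact (h2.const_mul _).div_const _
  have hsum := (HasDerivAt.sum hterm).const_mul (k:ℝ)
  convert hsum using 1
  · rfl
  · rfl
  · funext z
    rw [Finset.sum_apply]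
  have hbin : ∑ j ∈ Finset.range k, (-1:ℝ)^j * ((k-1).choose j : ℝ) * (1-y)^j = y^(k-1) := by
    have hap := add_pow (-(1-y)) 1 (k-1)
    rw [Nat.sub_add_cancel hk] at hap
    have : ∑ j ∈ Finset.range k, (-1:ℝ)^j * ((k-1).choose j : ℝ) * (1-y)^j
        = ∑ j ∈ Finset.range k, (-(1-y))^j * 1^((k-1)-j) * ((k-1).choose j : ℝ) := by
      apply Finset.sum_congr rfl
      intro j _
      rw [neg_pow (1-y) j]
      ring
    rw [this, ← hap]
    norm_num
  calc (k:ℝ) * y^(k-1) * (1-y)^((k:ℝ)-1/2)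
      = (k:ℝ) * ((∑ j ∈ Finset.range k, (-1:ℝ)^j * ((k-1).choose j : ℝ) * (1-y)^j)
          * (1-y)^((k:ℝ)-1/2)) := by rw [hbin]; ring
    _ = (k:ℝ) * ∑ j ∈ Finset.range k, (-1:ℝ)^j * ((k-1).choose j : ℝ)
          * (((j:ℝ)+k+1/2) * (1-y)^((j:ℝ)+k+1/2-1)) / ((j:ℝ)+k+1/2) := by
        congr 1
        rw [Finset.sum_mul]
        apply Finset.sum_congr rfl
        intro j _
        have he : ((j:ℝ)+k+1/2-1) = (j:ℝ) + ((k:ℝ)-1/2) := by ring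
        have hne : ((j:ℝ)+k+1/2) ≠ 0 := by positivity
        rw [he, Real.rpow_add hy1, Real.rpow_natCast]
        field_simp

lemma key (k : ℕ) (hk : 0 < k) {x : ℝ} (hx0 : 0 < x) (hx1 : x < 1) :
    x^k * (1-x)^((k:ℝ)+1/2) * (∑' m : ℕ, Sc k m * x^m) =
      (k:ℝ) * ∑ j ∈ Finset.range k,
        (-1:ℝ)^j * ((k-1).choose j : ℝ) * (1 - (1-x)^((j:ℝ)+k+1/2)) / ((j:ℝ)+k+1/2) := by
  set g : ℝ → ℝ := fun z => z^k * (1-z)^((k:ℝ)+1/2) * (∑' m : ℕ, Sc k m * z^m) with hg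
  set h : ℝ → ℝ := fun z => (k:ℝ) * ∑ j ∈ Finset.range k,
      (-1:ℝ)^j * ((k-1).choose j : ℝ) * (1 - (1-z)^((j:ℝ)+k+1/2)) / ((j:ℝ)+k+1/2) with hh
  have hmem : ∀ y ∈ Set.Icc (0:ℝ) x, 0 ≤ y ∧ y < 1 := by
    intro y hy
    exact ⟨hy.1, lt_of_le_of_lt hy.2 hx1⟩
  have hF : ∀ y ∈ Set.Icc (0:ℝ) x, HasDerivAt (fun z => g z - h z) 0 y := by
    intro y hy
    obtain ⟨hy0, hy1⟩ := hmem y hy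
    have := (hasDerivAt_g k hk hy0 hy1).sub (hasDerivAt_h k hk hy0 hy1)
    simp only [sub_self] at this
    exact this
  have hconst := constant_of_has_deriv_right_zero
    (f := fun z => g z - h z) (a := 0) (b := x)
    (fun y hy => ((hF y hy).continuousAt).continuousWithinAt)
    (fun y hy => ((hF y (Set.mem_Icc.2 ⟨hy.1, hy.2.le⟩)).hasDerivWithinAt))
  have hx : g x - h x = g 0 - h 0 := hconst x (Set.mem_Icc.2 ⟨hx0.le, le_rfl⟩)
  have hg0 : g 0 = 0 := by
    simp [hg, zero_pow hk.ne']
  have hh0 : h 0 = 0 := by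
    rw [hh]
    simp only
    rw [show (1:ℝ) - 0 = 1 by ring]
    have : ∀ j ∈ Finset.range k,
        (-1:ℝ)^j * ((k-1).choose j : ℝ) * (1 - (1:ℝ)^((j:ℝ)+k+1/2)) / ((j:ℝ)+k+1/2) = 0 := by
      intro j _
      rw [Real.one_rpow]
      ring
    rw [Finset.sum_congr rfl this]
    simp
  have : g x - h x = 0 := by rw [hx, hg0, hh0]; ring
  show g x = h x
  linarith [this]

end Aux

/-- For a positive integer `k`, with `n = 2k+1`, and `0 < x < 1`,
`₂F₁(1, n-1/2; (n+1)/2; x)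
  = ((n-1)/(2(1-x)^(k+1/2) x^k)) ∑_{j=0}^{k-1} (-1)^j C(k-1,j)(1-(1-x)^(j+k+1/2))/(j+k+1/2)`. -/
theorem gaussHypergeom_odd (k n : ℕ) (hk : 0 < k) (hn : n = 2 * k + 1) (x : ℝ)
    (hx0 : 0 < x) (hx1 : x < 1) :
    gaussHypergeom 1 ((n : ℝ) - 1/2) (((n : ℝ) + 1) / 2) x =
      ((n : ℝ) - 1) / (2 * (1 - x) ^ ((k : ℝ) + 1/2) * x ^ k) *
        ∑ j ∈ range k,
          (-1) ^ j * (k - 1).choose j * (1 - (1 - x) ^ ((j : ℝ) + k + 1/2)) /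
            ((j : ℝ) + k + 1/2) := by
  subst hn
  have hb : ((2*k+1 : ℕ):ℝ) - 1/2 = 2*(k:ℝ) + 1/2 := by push_cast; ring
  have hc : (((2*k+1 : ℕ):ℝ) + 1)/2 = (k:ℝ) + 1 := by push_cast; ring
  rw [gaussHypergeom, hb, hc]
  have hS : (∑' m : ℕ, (ascPochhammer ℝ m).eval 1 * (ascPochhammer ℝ m).eval (2*(k:ℝ)+1/2) /
      (ascPochhammer ℝ m).eval ((k:ℝ)+1) * x ^ m / (Nat.factorial m))
      = ∑' m : ℕ, Sc k m * x^m := by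
    apply tsum_congr
    intro m
    have hfac : ((Nat.factorial m : ℝ)) ≠ 0 := by
      exact_mod_cast (Nat.factorial_pos m).ne'
    have hQ : (ascPochhammer ℝ m).eval ((k:ℝ)+1) ≠ 0 :=
      (ascPochhammer_pos _ _ (by positivity)).ne'
    rw [ascPochhammer_eval_one, Sc]
    field_simp
  rw [hS]
  have hkey := key k hk hx0 hx1
  have hW : (0:ℝ) < (1-x)^((k:ℝ)+1/2) := Real.rpow_pos_of_pos (by linarith) _
  have hn1 : ((2*k+1 : ℕ):ℝ) - 1 = 2*(k:ℝ) := by push_cast; ring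
  rw [hn1]
  have h2 : 2 * (1-x)^((k:ℝ)+1/2) * x^k ≠ 0 := by positivity
  rw [div_mul_eq_mul_div, eq_div_iff h2]
  linear_combination (2:ℝ) * hkey
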